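/- arXiv:1803.05269 — 5 statements merged into one kernel-verified Lean document; each statement's English description precedes it below -/
import Mathlib

section
/- Let 𝒯 = 𝒳 ⊥ 𝒴 and 𝒯 = 𝒳′ ⊥ 𝒴′ be two semi-orthogonal decompositions of a triangulated category 𝒯 such that 𝒳 ⊆ 𝒳′ and 𝒴′ ⊆ 𝒴, and assume 𝒳′ is a thick subcategory of 𝒯. Then 𝒯 = 𝒳 ⊥ (𝒴 ∩ 𝒳′) ⊥ 𝒴′; that is: every object of 𝒯 belongs to 𝒳 * (𝒴 ∩ 𝒳′) * 𝒴′, and Hom_𝒯(A, B) = 0 whenever A ∈ 𝒳 and B ∈ 𝒴 ∩ 𝒳′, or A ∈ 𝒳 and B ∈ 𝒴′, or A ∈ 𝒴 ∩ 𝒳′ and B ∈ 𝒴′. -/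
open CategoryTheory Limits Pretriangulated

universe v u

variable {C : Type u} [Category.{v} C] [Preadditive C] [HasZeroObject C]
  [HasShift C ℤ] [∀ n : ℤ, (shiftFunctor C n).Additive] [Pretriangulated C]

/-- `Z ∈ 𝒳 * 𝒴`: there is a distinguished triangle `X ⟶ Z ⟶ Y ⟶ X⟦1⟧` with `X ∈ 𝒳`, `Y ∈ 𝒴`. -/
def memStar (𝒳 𝒴 : Set C) (Z : C) : Prop :=
  ∃ (X Y : C) (f : X ⟶ Z) (g : Z ⟶ Y) (h : Y ⟶ X⟦(1 : ℤ)⟧),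
    X ∈ 𝒳 ∧ Y ∈ 𝒴 ∧ Triangle.mk f g h ∈ distTriang C

/-- `𝒯 = 𝒳 ⊥ 𝒴` is a semi-orthogonal decomposition: every object of `𝒯` lies in `𝒳 * 𝒴`
and there are no nonzero morphisms from objects of `𝒳` to objects of `𝒴`. -/
def IsSOD (𝒳 𝒴 : Set C) : Prop :=
  (∀ Z : C, memStar 𝒳 𝒴 Z) ∧
  (∀ X Y : C, X ∈ 𝒳 → Y ∈ 𝒴 → ∀ f : X ⟶ Y, f = 0)

/-- A thick subcategory: closed under isomorphisms, shifts in both directions,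
extensions, and direct summands. -/
structure IsThick (𝒵 : Set C) : Prop where
  mem_of_iso : ∀ {A B : C}, (A ≅ B) → A ∈ 𝒵 → B ∈ 𝒵
  shift_mem : ∀ (A : C) (n : ℤ), A ∈ 𝒵 → (A⟦n⟧ : C) ∈ 𝒵
  ext₂ : ∀ (T : Triangle C), T ∈ (distTriang C) → T.obj₁ ∈ 𝒵 → T.obj₃ ∈ 𝒵 → T.obj₂ ∈ 𝒵
  mem_of_summand : ∀ (A B : C), (∃ (i : A ⟶ B) (r : B ⟶ A), i ≫ r = 𝟙 A) → B ∈ 𝒵 → A ∈ 𝒵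

/-- Lemma "modular" (c): given semi-orthogonal decompositions `𝒯 = 𝒳 ⊥ 𝒴` and `𝒯 = 𝒳' ⊥ 𝒴'`
with `𝒳 ⊆ 𝒳'` (equivalently `𝒴' ⊆ 𝒴`), where `𝒳'` is thick, there is a semi-orthogonal
decomposition `𝒯 = 𝒳 ⊥ (𝒴 ∩ 𝒳') ⊥ 𝒴'`. -/
theorem modular_c (𝒳 𝒴 𝒳' 𝒴' : Set C)
    (h𝒳iso : ∀ {A B : C}, (A ≅ B) → A ∈ 𝒳 → B ∈ 𝒳)
    (h𝒴iso : ∀ {A B : C}, (A ≅ B) → A ∈ 𝒴 → B ∈ 𝒴)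
    (h𝒳'iso : ∀ {A B : C}, (A ≅ B) → A ∈ 𝒳' → B ∈ 𝒳')
    (h𝒴'iso : ∀ {A B : C}, (A ≅ B) → A ∈ 𝒴' → B ∈ 𝒴')
    (hSOD : IsSOD 𝒳 𝒴) (hSOD' : IsSOD 𝒳' 𝒴')
    (h𝒳𝒳' : 𝒳 ⊆ 𝒳') (h𝒴'𝒴 : 𝒴' ⊆ 𝒴) (h𝒳' : IsThick 𝒳') :
    (∀ Z : C, Z ∈ setOf (memStar (setOf (memStar 𝒳 (𝒴 ∩ 𝒳'))) 𝒴')) ∧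
    (∀ A B : C, A ∈ 𝒳 → B ∈ 𝒴 ∩ 𝒳' → ∀ f : A ⟶ B, f = 0) ∧
    (∀ A B : C, A ∈ 𝒳 → B ∈ 𝒴' → ∀ f : A ⟶ B, f = 0) ∧
    (∀ A B : C, A ∈ 𝒴 ∩ 𝒳' → B ∈ 𝒴' → ∀ f : A ⟶ B, f = 0) := by
  refine ⟨?_, fun A B hA hB f => hSOD.2 A B hA hB.1 f,
    fun A B hA hB f => hSOD.2 A B hA (h𝒴'𝒴 hB) f,
    fun A B hA hB f => hSOD'.2 A B hA.2 hB f⟩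
  intro Z
  obtain ⟨X', Y', f, g, h, hX', hY', hT⟩ := hSOD'.1 Z
  obtain ⟨X, Y, f', g', h', hX, hY, hT'⟩ := hSOD.1 X'
  have hY𝒳' : Y ∈ 𝒳' :=
    h𝒳'.ext₂ _ (rot_of_distTriang _ hT') hX' (h𝒳'.shift_mem X 1 (h𝒳𝒳' hX))
  exact ⟨X', Y', f, g, h, ⟨X, Y, f', g', h', hX, ⟨hY, hY𝒳'⟩, hT'⟩, hY', hT⟩
end

section
/- If r ∈ R is a homogeneous non-zero-divisor of positive degree, then K = R[r^{-1}]: every homogeneous non-zero-divisor of R maps to a unit in the localization of R away from r, and consequently the canonical ring homomorphism from the localization of R at the submonoid of powers of r to the graded total quotient ring K is an isomorphism. -/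
open CategoryTheory

universe u

/-- A commutative ring `R` is Gorenstein in the sense that it has finite injective dimension
as a module over itself: there is `n : ℕ` such that `Ext^i_R(M, R) = 0` for all `R`-modules
`M` and all `i > n`. -/
def HasFiniteSelfInjDim (R : Type u) [CommRing R] : Prop :=
  ∃ n : ℕ, ∀ (M : ModuleCat.{u} R) (i : ℕ), n < i →
    Subsingleton (((Ext R (ModuleCat.{u} R) i).obj (Opposite.op M)).obj (ModuleCat.of R R))

/-- The multiplicative submonoid of homogeneous non-zero-divisors of a graded ring. -/
def homNZD {R : Type u} [CommRing R] (𝒜 : ℤ → AddSubgroup R) [GradedRing 𝒜] : Submonoid R :=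
  SetLike.homogeneousSubmonoid 𝒜 ⊓ nonZeroDivisors R

/-- A non-zero-divisor does not lie in any minimal prime. -/
lemma nzd_not_mem_minimalPrime {R : Type u} [CommRing R]
    {q : Ideal R} (hq : q ∈ minimalPrimes R) {s : R} (hs : s ∈ nonZeroDivisors R) :
    s ∉ q := by
  intro hsq
  have hqp : q.IsPrime := hq.1.1
  have hone : (1 : R) ∉ q := fun h => hqp.ne_top (Ideal.eq_top_iff_one q |>.mpr h)
  set T : Submonoid R :=
    { carrier := {x | ∃ t n, t ∉ q ∧ x = t * s ^ n}
      one_mem' := ⟨1, 0, hone, by ring⟩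
      mul_mem' := by
        rintro a b ⟨t1, n1, ht1, rfl⟩ ⟨t2, n2, ht2, rfl⟩
        exact ⟨t1 * t2, n1 + n2, fun h => ((hqp.mem_or_mem h).elim ht1 ht2), by ring⟩ }
    with hT
  have hdisj : Disjoint ((⊥ : Ideal R) : Set R) (T : Set R) := by
    rw [Set.disjoint_left]
    rintro x hx ⟨t, n, ht, rfl⟩
    simp only [SetLike.mem_coe, Ideal.mem_bot] at hx
    have : t = 0 := (mul_right_mem_nonZeroDivisors_eq_zero_iff (pow_mem hs n)).mp hx
    exact ht (this ▸ q.zero_mem)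
  obtain ⟨p, hp, -, hpd⟩ := Ideal.exists_le_prime_disjoint (⊥ : Ideal R) T hdisj
  have hpq : p ≤ q := by
    intro x hxp
    by_contra hxq
    exact (Set.disjoint_left.mp hpd) hxp ⟨x, 0, hxq, by ring⟩
  have hqle : q ≤ p := hq.2 ⟨hp, bot_le⟩ hpq
  exact (Set.disjoint_left.mp hpd) (hqle hsq) ⟨1, 1, hone, by ring⟩

/-- If `r` is a homogeneous non-zero-divisor of positive degree in a `ℤ`-graded Gorenstein
ring of Krull dimension one with `R_i = 0` for `i < 0` and `R_0` a field, then every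
homogeneous non-zero-divisor of `R` becomes a unit in `R[r⁻¹]`, and the canonical ring
homomorphism from `R[r⁻¹]` to the graded total quotient ring
`K = (homogeneous non-zero-divisors)⁻¹ R` is an isomorphism. -/
theorem graded_total_quotient_eq_inverting_r
    (R : Type u) [CommRing R] [IsNoetherianRing R]
    (𝒜 : ℤ → AddSubgroup R) [GradedRing 𝒜]
    (hneg : ∀ i < 0, 𝒜 i = ⊥)
    (hfield : IsField (𝒜 0))
    (hGor : HasFiniteSelfInjDim R)
    (hdim : ringKrullDim R = 1)
    (r : R) (d : ℤ) (hd : 0 < d) (hrd : r ∈ 𝒜 d) (hr : r ∈ nonZeroDivisors R) :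
    (∀ s : R, SetLike.IsHomogeneousElem 𝒜 s → s ∈ nonZeroDivisors R →
      IsUnit (algebraMap R (Localization (Submonoid.powers r)) s)) ∧
    Function.Bijective
      (IsLocalization.map (M := Submonoid.powers r) (T := homNZD 𝒜)
        (Localization (homNZD 𝒜)) (RingHom.id R)
        (fun x hx => by
          obtain ⟨n, rfl⟩ := hx
          exact pow_mem (⟨⟨d, hrd⟩, hr⟩ : r ∈ homNZD 𝒜) n) :
        Localization (Submonoid.powers r) →+* Localization (homNZD 𝒜)) := by
  classical
  haveI : Nontrivial R := by
    obtain ⟨a, b, hab⟩ := hfield.exists_pair_ne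
    exact ⟨a, b, fun h => hab (Subtype.ext h)⟩
  have key : ∀ s : R, SetLike.IsHomogeneousElem 𝒜 s → s ∈ nonZeroDivisors R →
      ∃ (n : ℕ) (t : R), s * t = r ^ n := by
    intro s hshom hs
    obtain ⟨e, hse⟩ := hshom
    rcases lt_trichotomy e 0 with he | he | he
    · exfalso
      rw [hneg e he, AddSubgroup.mem_bot] at hse
      exact nonZeroDivisors.ne_zero hs hse
    · subst he
      have hs0 : (⟨s, hse⟩ : 𝒜 0) ≠ 0 := by
        intro h
        exact nonZeroDivisors.ne_zero hs (by simpa using congrArg Subtype.val h)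
      obtain ⟨u, hu⟩ := hfield.mul_inv_cancel hs0
      refine ⟨0, u, ?_⟩
      rw [pow_zero]
      simpa using congrArg Subtype.val hu
    · have hrad : r ∈ (Ideal.span {s}).radical := by
        rw [Ideal.radical_eq_sInf]
        refine Submodule.mem_sInf.mpr ?_
        rintro p ⟨hsp, hp⟩
        set P := (Ideal.homogeneousCore 𝒜 p).toIdeal with hPdef
        have hPprime : P.IsPrime := hp.homogeneousCore
        have hsP : s ∈ P :=
          Ideal.mem_homogeneousCore_of_homogeneous_of_mem ⟨e, hse⟩
            (hsp (Ideal.mem_span_singleton_self s))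
        have hPp : P ≤ p := Ideal.toIdeal_homogeneousCore_le 𝒜 p
        suffices hrP : r ∈ P from hPp hrP
        by_contra hrP
        have hne : P ⊔ Ideal.span {r} ≠ ⊤ := by
          intro htop
          have h1 : (1 : R) ∈ P ⊔ Ideal.span {r} := htop ▸ Submodule.mem_top
          obtain ⟨x, hx, z, hz, hxz⟩ := Submodule.mem_sup.mp h1
          obtain ⟨y, rfl⟩ := Ideal.mem_span_singleton'.mp hz
          have h1' : (1 : R) = ((DirectSum.decompose 𝒜 x 0 : 𝒜 0) : R) +
              ((DirectSum.decompose 𝒜 (y * r) 0 : 𝒜 0) : R) := by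
            have := congrArg (fun w => ((DirectSum.decompose 𝒜 w 0 : 𝒜 0) : R)) hxz
            simp only [DirectSum.decompose_add, DirectSum.add_apply,
              AddSubgroup.coe_add] at this
            rw [DirectSum.decompose_of_mem_same 𝒜 (SetLike.one_mem_graded 𝒜)] at this
            exact this.symm
          have h2 : ((DirectSum.decompose 𝒜 (y * r) 0 : 𝒜 0) : R) = 0 := by
            have hy0 : ∀ w : R, w ∈ 𝒜 (-d) → w = 0 := by
              intro w hw
              rw [hneg (-d) (by omega)] at hw
              exact AddSubgroup.mem_bot.mp hw
            have hy : ((DirectSum.decompose 𝒜 y (-d) : 𝒜 (-d)) : R) = 0 :=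
              hy0 _ (SetLike.coe_mem _)
            have e0 : (-d) + d = 0 := by ring
            have h3 : ((DirectSum.decompose 𝒜 (y * r) ((-d) + d) : 𝒜 ((-d) + d)) : R)
                = ((DirectSum.decompose 𝒜 y (-d) : 𝒜 (-d)) : R) * r := by
              have hyr : y * r = y * ((⟨r, hrd⟩ : 𝒜 d) : R) := rfl
              rw [hyr, DirectSum.decompose_mul, DirectSum.decompose_coe]
              exact DirectSum.coe_mul_of_apply_add (A := 𝒜) _ _ _
            rw [hy, zero_mul] at h3
            exact e0 ▸ h3
          have h3 : ((DirectSum.decompose 𝒜 x 0 : 𝒜 0) : R) ∈ P :=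
            (Ideal.homogeneousCore 𝒜 p).isHomogeneous 0 hx
          have hone : (1 : R) ∈ P := by rw [h1', h2, add_zero]; exact h3
          exact hPprime.ne_top ((Ideal.eq_top_iff_one P).mpr hone)
        obtain ⟨m, hm, hPm⟩ := Ideal.exists_le_maximal _ hne
        have hrm : r ∈ m := hPm (le_sup_right (α := Ideal R) (Ideal.mem_span_singleton_self r))
        have hPm' : P ≤ m := le_trans le_sup_left hPm
        have hPltm : P < m := hPm'.lt_of_ne (fun h => hrP (h ▸ hrm))
        obtain ⟨q, hqmin, hqP⟩ := Ideal.exists_minimalPrimes_le (bot_le : (⊥ : Ideal R) ≤ P)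
        have hsq : s ∉ q := nzd_not_mem_minimalPrime hqmin hs
        have hqlt : q < P := hqP.lt_of_ne (fun h => hsq (h ▸ hsP))
        have hqprime : q.IsPrime := hqmin.1.1
        let c : LTSeries (PrimeSpectrum R) :=
          (RelSeries.singleton _ (⟨m, hm.isPrime⟩ : PrimeSpectrum R) |>.cons
            ⟨P, hPprime⟩ hPltm) |>.cons ⟨q, hqprime⟩ ?_
        · have hlen := Order.LTSeries.length_le_krullDim c
          rw [show ringKrullDim R = Order.krullDim (PrimeSpectrum R) from rfl] at hdim
          rw [hdim] at hlen
          have : c.length = 2 := rfl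
          rw [this] at hlen
          norm_num at hlen
        · show (⟨q, hqprime⟩ : PrimeSpectrum R) < _
          change _ < (⟨P, hPprime⟩ : PrimeSpectrum R)
          exact hqlt
      obtain ⟨n, hn⟩ := Ideal.mem_radical_iff.mp hrad
      obtain ⟨a, ha⟩ := Ideal.mem_span_singleton'.mp hn
      exact ⟨n, a, by rw [mul_comm]; exact ha⟩
  have part1 : ∀ s : R, SetLike.IsHomogeneousElem 𝒜 s → s ∈ nonZeroDivisors R →
      IsUnit (algebraMap R (Localization (Submonoid.powers r)) s) := by
    intro s hshom hs
    obtain ⟨n, t, hst⟩ := key s hshom hs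
    have hu : IsUnit (algebraMap R (Localization (Submonoid.powers r)) (r ^ n)) :=
      IsLocalization.map_units _ (⟨r ^ n, ⟨n, rfl⟩⟩ : Submonoid.powers r)
    rw [← hst, map_mul] at hu
    exact isUnit_of_mul_isUnit_left hu
  refine ⟨part1, ?_⟩
  haveI : IsLocalization (homNZD 𝒜) (Localization (Submonoid.powers r)) := by
    refine IsLocalization.of_le (Submonoid.powers r) (homNZD 𝒜) ?_ ?_
    · rintro x ⟨n, rfl⟩
      exact pow_mem (⟨⟨d, hrd⟩, hr⟩ : r ∈ homNZD 𝒜) n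
    · rintro x ⟨hx1, hx2⟩
      exact part1 x hx1 hx2
  exact IsLocalization.bijective (homNZD 𝒜) _
    ((IsLocalization.map_comp _).trans (RingHom.comp_id _))
end

section
/- Let X be a finitely generated ℤ-graded R-module, i.e. X carries a direct sum decomposition X = ⊕_{i∈ℤ} X_i into additive subgroups with R_i · X_j ⊆ X_{i+j} for all i, j. Then every minimal element (with respect to inclusion) of the non-projective locus NP(X) = { 𝔭 ∈ Spec R | the localization X_𝔭 is not a projective R_𝔭-module } is a homogeneous (graded) prime ideal of R. -/
open CategoryTheory

universe u

/-- The non-projective locus of an `R`-module `X`: the set of primes `𝔭` such that the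
localization `X_𝔭` is not projective over `R_𝔭`. -/
def nonProjLocus (R : Type u) [CommRing R] (X : Type u) [AddCommGroup X] [Module R X] :
    Set (Ideal R) :=
  {p : Ideal R | ∃ hp : p.IsPrime,
    letI := hp
    ¬ Module.Projective (Localization.AtPrime p) (LocalizedModule p.primeCompl X)}

set_option maxHeartbeats 1000000
set_option synthInstance.maxHeartbeats 200000

section Aux

open DirectSum

variable {R : Type u} [CommRing R]
  (𝒜 : ℤ → AddSubgroup R) [GradedRing 𝒜]
  {X : Type u} [AddCommGroup X] [Module R X]
  (ℳ : ℤ → AddSubgroup X) [DirectSum.Decomposition ℳ] [SetLike.GradedSMul 𝒜 ℳ]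

omit [GradedRing 𝒜] [DirectSum.Decomposition ℳ] in
lemma smul_mem_graded' {i j : ℤ} {a : R} {m : X} (ha : a ∈ 𝒜 i) (hm : m ∈ ℳ j) :
    a • m ∈ ℳ (i + j) :=
  SetLike.GradedSMul.smul_mem ha hm

/-- The degree-`c` component of a linear functional, as an additive map. -/
noncomputable def fcompAux (lam : X →ₗ[R] R) (c : ℤ) : X →+ R :=
  (DirectSum.toAddMonoid (fun e : ℤ =>
      (GradedRing.proj 𝒜 (e + c)).comp (lam.toAddMonoidHom.comp (ℳ e).subtype))).comp
    (DirectSum.decomposeAddEquiv ℳ).toAddMonoidHom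

lemma fcompAux_of_mem (lam : X →ₗ[R] R) {c e : ℤ} {x : X} (hx : x ∈ ℳ e) :
    fcompAux 𝒜 ℳ lam c x = (DirectSum.decompose 𝒜 (lam x) (e + c) : R) := by
  have h1 : (DirectSum.decomposeAddEquiv ℳ) x = DirectSum.of (fun i => (ℳ i : AddSubgroup X)) e ⟨x, hx⟩ :=
    DirectSum.decompose_of_mem ℳ hx
  rw [fcompAux, AddMonoidHom.comp_apply, AddEquiv.coe_toAddMonoidHom, h1,
    DirectSum.toAddMonoid_of]
  simp [GradedRing.proj_apply]

lemma fcompAux_smul (lam : X →ₗ[R] R) (c : ℤ) (r : R) (x : X) :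
    fcompAux 𝒜 ℳ lam c (r • x) = r * fcompAux 𝒜 ℳ lam c x := by
  induction x using DirectSum.Decomposition.inductionOn ℳ with
  | zero => simp
  | @homogeneous e m =>
    induction r using DirectSum.Decomposition.inductionOn 𝒜 with
    | zero => simp
    | @homogeneous b a =>
      have hmem : (a : R) • (m : X) ∈ ℳ (b + e) := smul_mem_graded' 𝒜 ℳ a.2 m.2
      rw [fcompAux_of_mem 𝒜 ℳ lam hmem, fcompAux_of_mem 𝒜 ℳ lam m.2, map_smul,
        smul_eq_mul, add_assoc]
      exact DirectSum.coe_decompose_mul_add_of_left_mem 𝒜 a.2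
    | add r1 r2 h1 h2 =>
      rw [add_smul, map_add, h1, h2, add_mul]
  | add a b ha hb =>
    rw [smul_add, map_add, map_add, ha, hb, mul_add]

/-- The degree-`c` component of a linear functional. -/
noncomputable def fcomp (lam : X →ₗ[R] R) (c : ℤ) : X →ₗ[R] R where
  toFun := fcompAux 𝒜 ℳ lam c
  map_add' := map_add _
  map_smul' := fcompAux_smul 𝒜 ℳ lam c

lemma fcomp_of_mem (lam : X →ₗ[R] R) {c e : ℤ} {x : X} (hx : x ∈ ℳ e) :
    fcomp 𝒜 ℳ lam c x = (DirectSum.decompose 𝒜 (lam x) (e + c) : R) :=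
  fcompAux_of_mem 𝒜 ℳ lam hx

lemma fcomp_mem (lam : X →ₗ[R] R) {c e : ℤ} {x : X} (hx : x ∈ ℳ e) :
    fcomp 𝒜 ℳ lam c x ∈ 𝒜 (e + c) := by
  rw [fcomp_of_mem 𝒜 ℳ lam hx]; exact SetLike.coe_mem _
omit [GradedRing 𝒜] in
lemma decompose_component_of_sum (T : Finset ℤ) (e j : ℤ) (hj : j ∈ T) (w : ℤ → X)
    (hw : ∀ c ∈ T, w c ∈ ℳ (e + c)) :
    (DirectSum.decompose ℳ (∑ c ∈ T, w c) (e + j) : X) = w j := by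
  classical
  have h0 : (∑ c ∈ T, w c) = ∑ c ∈ T.attach, w c.1 := (Finset.sum_attach _ _).symm
  have h1 : DirectSum.decompose ℳ (∑ c ∈ T, w c)
      = ∑ c ∈ T.attach, DirectSum.of (fun i => (ℳ i : AddSubgroup X)) (e + c.1)
          ⟨w c.1, hw c.1 c.2⟩ := by
    rw [h0, ← DirectSum.decomposeAddEquiv_apply, map_sum]
    refine Finset.sum_congr rfl fun c _ => ?_
    exact DirectSum.decompose_of_mem ℳ (hw c.1 c.2)
  rw [h1, DFinsupp.finset_sum_apply, AddSubmonoidClass.coe_finset_sum]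
  rw [Finset.sum_eq_single (⟨j, hj⟩ : {x // x ∈ T})]
  · rw [DirectSum.of_eq_same]
  · intro c _ hne
    rw [DirectSum.of_eq_of_ne _ _ _ (by
      intro h
      exact hne (Subtype.ext (show c.1 = j by omega))), ZeroMemClass.coe_zero]
  · intro h
    exact absurd (Finset.mem_attach _ _) h

omit [GradedRing 𝒜] in
lemma eq_component_of_sums (T : Finset ℤ) (e j : ℤ) (hj : j ∈ T) (w w' : ℤ → X)
    (hw : ∀ c ∈ T, w c ∈ ℳ (e + c)) (hw' : ∀ c ∈ T, w' c ∈ ℳ (e + c))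
    (heq : ∑ c ∈ T, w c = ∑ c ∈ T, w' c) : w j = w' j := by
  rw [← decompose_component_of_sum ℳ T e j hj w hw, heq,
    decompose_component_of_sum ℳ T e j hj w' hw']


lemma component_mem_I
    {n : ℕ} (x : Fin n → X) (d : Fin n → ℤ) (hx : ∀ i, x i ∈ ℳ (d i))
    (hspan : Submodule.span R (Set.range x) = ⊤)
    (r : R) (s : X →ₗ[R] (Fin n → R))
    (hs : Fintype.linearCombination R x ∘ₗ s = r • LinearMap.id) (j : ℤ) :
    ∃ s' : X →ₗ[R] (Fin n → R),
      Fintype.linearCombination R x ∘ₗ s' =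
        (DirectSum.decompose 𝒜 r j : R) • LinearMap.id := by
  classical
  let π : (Fin n → R) →ₗ[R] X := Fintype.linearCombination R x
  let lam : Fin n → (X →ₗ[R] R) := fun i => LinearMap.proj i ∘ₗ s
  have hvan0 : ∀ (i k : Fin n) (c : ℤ),
      c ∉ (DirectSum.decompose 𝒜 (lam i (x k))).support.image (fun e => e - d k) →
      fcomp 𝒜 ℳ (lam i) c (x k) = 0 := by
    intro i k c hc
    rw [fcomp_of_mem 𝒜 ℳ _ (hx k)]
    by_contra hne
    refine hc (Finset.mem_image.mpr ⟨d k + c, DFinsupp.mem_support_iff.mpr ?_, by ring⟩)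
    intro h0
    exact hne (by rw [h0, ZeroMemClass.coe_zero])
  let Si : Fin n → Finset ℤ := fun i => Finset.univ.biUnion
    (fun k => (DirectSum.decompose 𝒜 (lam i (x k))).support.image (fun e => e - d k))
  have hvan : ∀ (i : Fin n) (c : ℤ), c ∉ Si i → fcomp 𝒜 ℳ (lam i) c = 0 := by
    intro i c hc
    apply LinearMap.ext_on hspan
    rintro _ ⟨k, rfl⟩
    rw [LinearMap.zero_apply]
    exact hvan0 i k c (fun hmem => hc (Finset.mem_biUnion.mpr ⟨k, Finset.mem_univ k, hmem⟩))
  have hsumS : ∀ (i : Fin n) (T : Finset ℤ), Si i ⊆ T →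
      ∑ c ∈ T, fcomp 𝒜 ℳ (lam i) c = lam i := by
    intro i T hT
    apply LinearMap.ext_on hspan
    rintro _ ⟨k, rfl⟩
    rw [LinearMap.sum_apply]
    have hS0T : ((DirectSum.decompose 𝒜 (lam i (x k))).support.image (fun e => e - d k)) ⊆ T :=
      fun c hc => hT (Finset.mem_biUnion.mpr ⟨k, Finset.mem_univ k, hc⟩)
    rw [← Finset.sum_subset hS0T (fun c _ hc => hvan0 i k c hc)]
    rw [Finset.sum_image (fun a _ b _ h => by simpa using h)]
    have heq : ∀ e ∈ (DirectSum.decompose 𝒜 (lam i (x k))).support,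
        fcomp 𝒜 ℳ (lam i) (e - d k) (x k) = (DirectSum.decompose 𝒜 (lam i (x k)) e : R) := by
      intro e _
      rw [fcomp_of_mem 𝒜 ℳ _ (hx k), show d k + (e - d k) = e by ring]
    rw [Finset.sum_congr rfl heq]
    exact DirectSum.sum_support_decompose 𝒜 _
  let T : Finset ℤ := ((Finset.univ.biUnion (fun i => (Si i).image (fun c => c + d i))) ∪ {j})
      ∪ (DirectSum.decompose 𝒜 r).support
  have hjT : j ∈ T := by simp [T]
  let sc : ℤ → (X →ₗ[R] (Fin n → R)) := fun c => LinearMap.pi (fun i => fcomp 𝒜 ℳ (lam i) (c - d i))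
  have hsum_s : ∑ c ∈ T, sc c = s := by
    apply LinearMap.ext
    intro z
    rw [LinearMap.sum_apply]
    funext i
    rw [Finset.sum_apply]
    have h1 : ∀ c ∈ T, (sc c) z i = fcomp 𝒜 ℳ (lam i) (c - d i) z := fun c _ => rfl
    rw [Finset.sum_congr rfl h1]
    rw [show (∑ c ∈ T, fcomp 𝒜 ℳ (lam i) (c - d i) z)
        = ∑ c' ∈ T.image (fun c => c - d i), fcomp 𝒜 ℳ (lam i) c' z from by
      rw [Finset.sum_image (fun a _ b _ h => by simpa using h)]]
    have hsub : Si i ⊆ T.image (fun c => c - d i) := by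
      intro c' hc'
      refine Finset.mem_image.mpr ⟨c' + d i, ?_, by ring⟩
      exact Finset.mem_union_left _ (Finset.mem_union_left _
        (Finset.mem_biUnion.mpr ⟨i, Finset.mem_univ i, Finset.mem_image.mpr ⟨c', hc', rfl⟩⟩))
    have := LinearMap.congr_fun (hsumS i (T.image (fun c => c - d i)) hsub) z
    rw [LinearMap.sum_apply] at this
    exact this
  refine ⟨sc j, ?_⟩
  apply LinearMap.ext_on hspan
  rintro _ ⟨k, rfl⟩
  rw [LinearMap.comp_apply, LinearMap.smul_apply, LinearMap.id_apply]
  let w : ℤ → X := fun c => π (sc c (x k))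
  let w' : ℤ → X := fun c => (DirectSum.decompose 𝒜 r c : R) • x k
  have hwmem : ∀ c ∈ T, w c ∈ ℳ (d k + c) := by
    intro c _
    show π (sc c (x k)) ∈ ℳ (d k + c)
    rw [show π (sc c (x k)) = ∑ i, (sc c (x k)) i • x i from rfl]
    apply AddSubgroup.sum_mem
    intro i _
    have h1 : (sc c (x k)) i ∈ 𝒜 (d k + (c - d i)) := fcomp_mem 𝒜 ℳ _ (hx k)
    have h2 := smul_mem_graded' 𝒜 ℳ h1 (hx i)
    rwa [show d k + (c - d i) + d i = d k + c by ring] at h2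
  have hw'mem : ∀ c ∈ T, w' c ∈ ℳ (d k + c) := by
    intro c _
    have h2 := smul_mem_graded' 𝒜 ℳ (SetLike.coe_mem (DirectSum.decompose 𝒜 r c)) (hx k)
    rwa [show c + d k = d k + c by ring] at h2
  have hsums : ∑ c ∈ T, w c = ∑ c ∈ T, w' c := by
    have hL : ∑ c ∈ T, w c = π (s (x k)) := by
      rw [show ∑ c ∈ T, w c = π (∑ c ∈ T, sc c (x k)) from (map_sum π _ T).symm]
      congr 1
      rw [← LinearMap.sum_apply, hsum_s]
    have hR : ∑ c ∈ T, w' c = r • x k := by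
      have hsub : (DirectSum.decompose 𝒜 r).support ⊆ T := Finset.subset_union_right
      show ∑ c ∈ T, (DirectSum.decompose 𝒜 r c : R) • x k = r • x k
      rw [← Finset.sum_smul]
      congr 1
      rw [← Finset.sum_subset hsub (fun c _ hc => by
        rw [DFinsupp.notMem_support_iff.mp hc, ZeroMemClass.coe_zero])]
      exact DirectSum.sum_support_decompose 𝒜 r
    rw [hL, hR]
    have := LinearMap.congr_fun hs (x k)
    rw [LinearMap.comp_apply] at this
    rw [this, LinearMap.smul_apply, LinearMap.id_apply]
  exact eq_component_of_sums ℳ T (d k) j hjT w w' hwmem hw'mem hsums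

end Aux

section Loc

variable {R : Type u} [CommRing R] {X : Type u} [AddCommGroup X] [Module R X]

lemma projective_of_trace_unit {n : ℕ} (π : (Fin n → R) →ₗ[R] X) (q : Ideal R) [q.IsPrime]
    (u : R) (hu : u ∉ q) (s : X →ₗ[R] (Fin n → R)) (hs : π ∘ₗ s = u • LinearMap.id) :
    Module.Projective (Localization.AtPrime q) (LocalizedModule q.primeCompl X) := by
  set S := q.primeCompl with hS
  have huset : u ∈ S := hu
  have hunit : IsUnit (algebraMap R (Localization S) u) :=
    IsLocalization.map_units _ (⟨u, huset⟩ : S)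
  let πs := LocalizedModule.map S π
  let ss := LocalizedModule.map S s
  have hps : ∀ z : LocalizedModule S X, πs (ss z) = algebraMap R (Localization S) u • z := by
    intro z
    induction z using LocalizedModule.induction_on with
    | h m t =>
      rw [show ss (LocalizedModule.mk m t) = LocalizedModule.mk (s m) t from
        LocalizedModule.map_mk S s m t]
      rw [show πs (LocalizedModule.mk (s m) t) = LocalizedModule.mk (π (s m)) t from
        LocalizedModule.map_mk S π _ t]
      have h1 : π (s m) = u • m := by simpa using LinearMap.congr_fun hs m
      rw [h1, ← LocalizedModule.smul'_mk, algebraMap_smul]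
  have hF : Module.Projective (Localization S) (LocalizedModule S (Fin n → R)) :=
    Module.projective_of_isLocalizedModule S (LocalizedModule.mkLinearMap S (Fin n → R))
  refine Module.Projective.of_split (R := Localization S)
    (M := LocalizedModule S (Fin n → R))
    (((hunit.unit⁻¹ : (Localization S)ˣ) : Localization S) • ss) πs ?_
  apply LinearMap.ext
  intro z
  rw [LinearMap.comp_apply, LinearMap.smul_apply, map_smul, hps z, smul_smul,
    IsUnit.val_inv_mul, one_smul, LinearMap.id_apply]

lemma exists_trace_unit_of_projective [IsNoetherianRing R] [Module.Finite R X]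
    {n : ℕ} (π : (Fin n → R) →ₗ[R] X) (hπ : Function.Surjective π)
    (q : Ideal R) [q.IsPrime]
    (hproj : Module.Projective (Localization.AtPrime q) (LocalizedModule q.primeCompl X)) :
    ∃ u, u ∉ q ∧ ∃ s : X →ₗ[R] (Fin n → R), π ∘ₗ s = u • LinearMap.id := by
  classical
  set S := q.primeCompl with hS
  have : Module.FinitePresentation R X := Module.finitePresentation_of_finite R X
  let πs := LocalizedModule.map S π
  have hπs : Function.Surjective πs := LocalizedModule.map_surjective S π hπ
  obtain ⟨σ, hσ⟩ := Module.projective_lifting_property πs LinearMap.id hπs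
  let g : X →ₗ[R] LocalizedModule S (Fin n → R) :=
    (σ.restrictScalars R) ∘ₗ LocalizedModule.mkLinearMap S X
  obtain ⟨h, t, hht⟩ := Module.FinitePresentation.exists_lift_of_isLocalizedModule S
    (LocalizedModule.mkLinearMap S (Fin n → R)) g
  have hcomp : (LocalizedModule.mkLinearMap S X) ∘ₗ (π ∘ₗ h)
      = (LocalizedModule.mkLinearMap S X) ∘ₗ ((t : R) • LinearMap.id) := by
    apply LinearMap.ext
    intro z
    have e1 : LocalizedModule.mkLinearMap S X (π (h z)) = πs (LocalizedModule.mkLinearMap S (Fin n → R) (h z)) := by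
      rw [show (LocalizedModule.mkLinearMap S (Fin n → R)) (h z) = LocalizedModule.mk (h z) 1 from rfl]
      rw [LocalizedModule.map_mk]
      rfl
    have e2 : LocalizedModule.mkLinearMap S (Fin n → R) (h z) = t • g z :=
      LinearMap.congr_fun hht z
    have e3 : πs (t • g z) = (t : R) • πs (σ (LocalizedModule.mk z 1)) := by
      rw [show (t • g z) = (t : R) • g z from rfl]
      exact LinearMap.map_smul_of_tower πs _ _
    have e4 : πs (σ (LocalizedModule.mk z 1)) = LocalizedModule.mk z 1 := by
      have := LinearMap.congr_fun hσ (LocalizedModule.mk z 1)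
      simpa using this
    rw [LinearMap.comp_apply, LinearMap.comp_apply, e1, e2, e3, e4]
    show (t : R) • LocalizedModule.mk z 1 = LocalizedModule.mk ((t : R) • z) 1
    rw [LocalizedModule.smul'_mk]
  obtain ⟨c, hc⟩ := Module.Finite.exists_smul_of_comp_eq_of_isLocalizedModule S
    (LocalizedModule.mkLinearMap S X) _ _ hcomp
  refine ⟨(c : R) * (t : R), ?_, (c : R) • h, ?_⟩
  · intro hmem
    exact (c * t).2 hmem
  · apply LinearMap.ext
    intro z
    have := LinearMap.congr_fun hc z
    rw [show (c • (π ∘ₗ h)) z = (c : R) • π (h z) from rfl] at this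
    rw [show (c • ((t : R) • LinearMap.id)) z = (c : R) • ((t : R) • z) from rfl] at this
    show π ((c : R) • h z) = ((c : R) * (t : R)) • z
    rw [map_smul, this, smul_smul]
end Loc

section Gens
open DirectSum

variable {R : Type u} [CommRing R]
  {X : Type u} [AddCommGroup X] [Module R X]
  (ℳ : ℤ → AddSubgroup X) [DirectSum.Decomposition ℳ]

lemma exists_homog_gens [Module.Finite R X] :
    ∃ (n : ℕ) (x : Fin n → X) (d : Fin n → ℤ),
      (∀ i, x i ∈ ℳ (d i)) ∧ Submodule.span R (Set.range x) = ⊤ := by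
  classical
  obtain ⟨S, hS⟩ := (Module.Finite.fg_top : (⊤ : Submodule R X).FG)
  let t : Finset X := S.biUnion (fun y => (DirectSum.decompose ℳ y).support.image
    (fun e => (DirectSum.decompose ℳ y e : X)))
  have ht : ∀ z ∈ t, ∃ e : ℤ, z ∈ ℳ e := by
    intro z hz
    obtain ⟨y, -, hz⟩ := Finset.mem_biUnion.mp hz
    obtain ⟨e, -, rfl⟩ := Finset.mem_image.mp hz
    exact ⟨e, SetLike.coe_mem _⟩
  have hspan : Submodule.span R (t : Set X) = ⊤ := by
    rw [eq_top_iff, ← hS]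
    apply Submodule.span_le.mpr
    intro y hy
    rw [← DirectSum.sum_support_decompose ℳ y]
    apply Submodule.sum_mem
    intro e he
    apply Submodule.subset_span
    exact Finset.mem_coe.mpr (Finset.mem_biUnion.mpr ⟨y, hy, Finset.mem_image.mpr ⟨e, he, rfl⟩⟩)
  choose d hd using ht
  refine ⟨t.card, fun i => ((t.equivFin.symm i : X)),
    fun i => d _ (t.equivFin.symm i).2, fun i => hd _ _, ?_⟩
  have hr : Set.range (fun i => ((t.equivFin.symm i : X))) = (t : Set X) := by
    ext z
    constructor
    · rintro ⟨i, rfl⟩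
      exact (t.equivFin.symm i).2
    · intro hz
      exact ⟨t.equivFin ⟨z, hz⟩, by simp⟩
  rw [hr, hspan]

end Gens


/-- Let `R` be a commutative Noetherian `ℤ`-graded Gorenstein ring of Krull dimension one
with `R_i = 0` for `i < 0` and `R_0` a field, and let `X` be a finitely generated
`ℤ`-graded `R`-module.  Then every minimal element (with respect to inclusion) of the
non-projective locus `NP(X)` is a homogeneous prime ideal of `R`. -/
theorem minimal_nonProjLocus_isHomogeneous
    (R : Type u) [CommRing R] [IsNoetherianRing R]
    (𝒜 : ℤ → AddSubgroup R) [GradedRing 𝒜]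
    (hneg : ∀ i < 0, 𝒜 i = ⊥)
    (hfield : IsField (𝒜 0))
    (hGor : HasFiniteSelfInjDim R)
    (hdim : ringKrullDim R = 1)
    (X : Type u) [AddCommGroup X] [Module R X] [Module.Finite R X]
    (ℳ : ℤ → AddSubgroup X) [DirectSum.Decomposition ℳ] [SetLike.GradedSMul 𝒜 ℳ]
    (p : Ideal R) (hp : Minimal (· ∈ nonProjLocus R X) p) :
    p.IsHomogeneous 𝒜 := by
  classical
  obtain ⟨hpp, hnp⟩ := hp.1
  haveI := hpp
  obtain ⟨n, x, d, hx, hspan⟩ := exists_homog_gens ℳ (R := R)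
  let π : (Fin n → R) →ₗ[R] X := Fintype.linearCombination R x
  have hπ : Function.Surjective π := by
    rw [← LinearMap.range_eq_top, Fintype.range_linearCombination, hspan]
  let I : Ideal R :=
    { carrier := {r : R | ∃ s : X →ₗ[R] (Fin n → R), π ∘ₗ s = r • LinearMap.id}
      add_mem' := by
        rintro a b ⟨sa, hsa⟩ ⟨sb, hsb⟩
        refine ⟨sa + sb, LinearMap.ext fun z => ?_⟩
        have h1 : π (sa z) = a • z := by simpa using LinearMap.congr_fun hsa z
        have h2 : π (sb z) = b • z := by simpa using LinearMap.congr_fun hsb z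
        show π ((sa + sb) z) = ((a + b) • LinearMap.id) z
        rw [LinearMap.add_apply, map_add, h1, h2, LinearMap.smul_apply, LinearMap.id_apply,
          add_smul]
      zero_mem' := ⟨0, by apply LinearMap.ext; intro z; simp⟩
      smul_mem' := by
        rintro c r ⟨sr, hsr⟩
        refine ⟨c • sr, LinearMap.ext fun z => ?_⟩
        have h1 : π (sr z) = r • z := by simpa using LinearMap.congr_fun hsr z
        show π ((c • sr) z) = ((c • r) • LinearMap.id) z
        rw [LinearMap.smul_apply, map_smul, h1, LinearMap.smul_apply, LinearMap.id_apply,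
          smul_eq_mul, mul_smul] }
  have hIhom : I.IsHomogeneous 𝒜 := by
    intro j r hr
    obtain ⟨s, hs⟩ := hr
    exact component_mem_I 𝒜 ℳ x d hx hspan r s hs j
  have hIp : I ≤ p := by
    by_contra hle
    rw [SetLike.le_def] at hle
    push_neg at hle
    obtain ⟨u, huI, hup⟩ := hle
    obtain ⟨su, hsu⟩ := huI
    exact hnp (projective_of_trace_unit π p u hup su hsu)
  set q : Ideal R := (p.homogeneousCore 𝒜).toIdeal with hq
  haveI hqprime : q.IsPrime := hpp.homogeneousCore (𝒜 := 𝒜)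
  have hIq : I ≤ q :=
    (Ideal.homogeneousCore.gc 𝒜 ⟨I, hIhom⟩ p).mp hIp
  have hqNP : q ∈ nonProjLocus R X := by
    refine ⟨hqprime, ?_⟩
    intro hproj
    obtain ⟨u, huq, su, hsu⟩ := exists_trace_unit_of_projective π hπ q hproj
    exact huq (hIq ⟨su, hsu⟩)
  have hqp : q ≤ p := Ideal.toIdeal_homogeneousCore_le 𝒜 p
  have hpq : p ≤ q := hp.2 hqNP hqp
  have heq : q = p := le_antisymm hqp hpq
  rw [← heq]
  exact (p.homogeneousCore 𝒜).isHomogeneous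
end

section
/- Let k be a field and n ≥ 1, and let R = k[x, y]/(x^{2n+1} − y^2), graded with deg x = 2 and deg y = 2n+1 (so x^{2n+1} − y^2 is homogeneous of degree 4n+2). Then the graded k-algebra homomorphism k[x, y] → k[t, t^{-1}] determined by x ↦ t^2 and y ↦ t^{2n+1} (where deg t = 1) induces an isomorphism from the graded total quotient ring of R onto the Laurent polynomial ring k[t, t^{-1}]. -/
open MvPolynomial LaurentPolynomial

universe u

set_option synthInstance.maxHeartbeats 1000000
set_option maxHeartbeats 1000000

variable {k : Type u} [Field k]

/-- The multiplicative submonoid of homogeneous non-zero-divisors of the quotient of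
`k[x, y]` (graded by assigning weight `w 0` to `x` and `w 1` to `y`) by an ideal `I`:
an element of the quotient is homogeneous if it is the image of a weighted homogeneous
polynomial. -/
def homogeneousNZD (w : Fin 2 → ℕ) (I : Ideal (MvPolynomial (Fin 2) k)) :
    Submonoid (MvPolynomial (Fin 2) k ⧸ I) where
  carrier := {r | (∃ (n : ℕ) (p : MvPolynomial (Fin 2) k),
      p.IsWeightedHomogeneous w n ∧ Ideal.Quotient.mk I p = r) ∧
    r ∈ nonZeroDivisors (MvPolynomial (Fin 2) k ⧸ I)}
  one_mem' := ⟨⟨0, 1, isWeightedHomogeneous_one k w, map_one _⟩, one_mem _⟩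
  mul_mem' := by
    rintro a b ⟨⟨m, p, hp, rfl⟩, ha⟩ ⟨⟨n, q, hq, rfl⟩, hb⟩
    exact ⟨⟨m + n, p * q, hp.mul hq, map_mul _ _ _⟩, mul_mem ha hb⟩

/-- The graded total quotient ring of `(k[x,y], w)/I`: the localization at the submonoid of
homogeneous non-zero-divisors. -/
abbrev gradedTotalQuotient (w : Fin 2 → ℕ) (I : Ideal (MvPolynomial (Fin 2) k)) :=
  Localization (homogeneousNZD w I)

-- pow of weighted homogeneous
lemma aux_wh_pow {w : Fin 2 → ℕ} {P : MvPolynomial (Fin 2) k} {m : ℕ}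
    (h : P.IsWeightedHomogeneous w m) (j : ℕ) :
    (P ^ j).IsWeightedHomogeneous w (j * m) := by
  induction j with
  | zero => simpa using isWeightedHomogeneous_one k w
  | succ j ih =>
      have : (j + 1) * m = j * m + m := by ring
      rw [pow_succ, this]
      exact ih.mul h

-- image of a weighted homogeneous polynomial under aeval ![T 2, T (2n+1)]
lemma aux_homog (n : ℕ) (P : MvPolynomial (Fin 2) k) (m : ℕ)
    (hP : P.IsWeightedHomogeneous ![2, 2 * n + 1] m) :
    ∃ c : k, aeval ![T 2, T (2 * n + 1)] P = LaurentPolynomial.C c * T (m : ℤ) := by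
  refine ⟨∑ d ∈ P.support, P.coeff d, ?_⟩
  conv_lhs => rw [P.as_sum]
  rw [map_sum, map_sum, Finset.sum_mul]
  refine Finset.sum_congr rfl fun d hd => ?_
  have hdeg : (d 0) * 2 + (d 1) * (2 * n + 1) = m := by
    have := hP (mem_support_iff.mp hd)
    rw [Finsupp.weight_apply, Finsupp.sum_fintype] at this
    · simpa [Fin.sum_univ_two, Matrix.cons_val_zero, Matrix.cons_val_one, Matrix.head_cons,
        smul_eq_mul] using this
    · intro i; simp
  rw [aeval_monomial]
  rw [Finsupp.prod_fintype _ _ (fun i => pow_zero _), Fin.prod_univ_two]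
  simp only [Matrix.cons_val_zero, Matrix.cons_val_one, Matrix.head_cons]
  rw [T_pow, T_pow, ← T_add, ← LaurentPolynomial.C_eq_algebraMap]
  have h2 : ((d 0 : ℤ)) * 2 + ((d 1 : ℤ)) * (2 * (n : ℤ) + 1) = (m : ℤ) := by exact_mod_cast hdeg
  congr 1
  push_cast
  rw [h2]


lemma aux_reduce (n : ℕ) (I : Ideal (MvPolynomial (Fin 2) k))
    (hI : I = Ideal.span {(X 0 : MvPolynomial (Fin 2) k) ^ (2 * n + 1) - X 1 ^ 2})
    (f : MvPolynomial (Fin 2) k) :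
    ∃ p q : Polynomial k,
      Ideal.Quotient.mk I f =
        Ideal.Quotient.mk I (Polynomial.aeval (X 0) p + Polynomial.aeval (X 0) q * X 1) := by
  have key' : (Ideal.Quotient.mk I (X 1)) ^ 2 = Ideal.Quotient.mk I (X 0) ^ (2 * n + 1) := by
    rw [← map_pow, ← map_pow, Ideal.Quotient.eq, hI]
    have h0 : (X 1 : MvPolynomial (Fin 2) k) ^ 2 - X 0 ^ (2 * n + 1) =
        -((X 0 : MvPolynomial (Fin 2) k) ^ (2 * n + 1) - X 1 ^ 2) := by ring
    rw [h0]
    exact neg_mem (Ideal.subset_span rfl)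
  induction f using MvPolynomial.induction_on with
  | C a => exact ⟨Polynomial.C a, 0, by simp⟩
  | add f g hf hg =>
      obtain ⟨p, q, hp⟩ := hf; obtain ⟨p', q', hq⟩ := hg
      refine ⟨p + p', q + q', ?_⟩
      rw [map_add, hp, hq, ← map_add]
      congr 1
      simp only [map_add]
      ring
  | mul_X f i hf =>
      obtain ⟨p, q, hp⟩ := hf
      fin_cases i
      · refine ⟨Polynomial.X * p, Polynomial.X * q, ?_⟩
        rw [map_mul, hp]
        simp only [map_add, map_mul, Polynomial.aeval_X, Fin.mk_zero, Fin.mk_one]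
        ring
      · refine ⟨Polynomial.X ^ (2 * n + 1) * q, p, ?_⟩
        rw [map_mul, hp]
        simp only [map_add, map_mul, map_pow, Polynomial.aeval_X, Fin.mk_zero, Fin.mk_one]
        linear_combination (Ideal.Quotient.mk I (Polynomial.aeval (X 0) q)) * key'

lemma aux_ker (n : ℕ) (I : Ideal (MvPolynomial (Fin 2) k))
    (hI : I = Ideal.span {(X 0 : MvPolynomial (Fin 2) k) ^ (2 * n + 1) - X 1 ^ 2})
    (hIle : ∀ a ∈ I, aeval ![T 2, T (2 * n + 1)] a = (0 : LaurentPolynomial k))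
    (f : MvPolynomial (Fin 2) k)
    (hf : aeval ![T 2, T (2 * n + 1)] f = (0 : LaurentPolynomial k)) : f ∈ I := by
  obtain ⟨p, q, hpq⟩ := aux_reduce n I hI f
  set φ : MvPolynomial (Fin 2) k →ₐ[k] LaurentPolynomial k := aeval ![T 2, T (2 * n + 1)] with hφ
  have hsub : f - (Polynomial.aeval (X 0) p + Polynomial.aeval (X 0) q * X 1) ∈ I :=
    Ideal.Quotient.eq.mp hpq
  have hg : φ (Polynomial.aeval (X 0) p + Polynomial.aeval (X 0) q * X 1) = 0 := by
    have := hIle _ hsub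
    rw [map_sub, hf, zero_sub, neg_eq_zero] at this
    exact this
  -- rewrite phi of the reduced form
  have hx0 : φ (X 0) = T 2 := by rw [hφ]; simp
  have hx1 : φ (X 1) = T (2 * n + 1) := by
    rw [hφ]; simp [Matrix.cons_val_one, Matrix.head_cons]
  have hp' : φ (Polynomial.aeval (X 0) p) = Polynomial.aeval (T 2 : LaurentPolynomial k) p := by
    rw [← hx0, ← Polynomial.aeval_algHom_apply]
  have hq' : φ (Polynomial.aeval (X 0) q) = Polynomial.aeval (T 2 : LaurentPolynomial k) q := by
    rw [← hx0, ← Polynomial.aeval_algHom_apply]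
  rw [map_add, map_mul, hp', hq', hx1] at hg
  -- transfer to polynomials via toLaurent
  have hT2 : ((Polynomial.toLaurentAlg (R := k)) (Polynomial.X ^ 2)) = T 2 := by
    simp [map_pow, Polynomial.toLaurentAlg_apply, Polynomial.toLaurent_X, T_pow]
  have hcomp : ∀ r : Polynomial k,
      Polynomial.toLaurent (r.comp (Polynomial.X ^ 2)) =
        Polynomial.aeval (T 2 : LaurentPolynomial k) r := by
    intro r
    rw [Polynomial.comp_eq_aeval, ← Polynomial.toLaurentAlg_apply,
      ← Polynomial.aeval_algHom_apply, hT2]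
  have hodd : Polynomial.toLaurent ((Polynomial.X : Polynomial k) ^ (2 * n + 1)) =
      T (2 * n + 1) := by
    rw [map_pow, Polynomial.toLaurent_X, T_pow]
    congr 1
    push_cast
    ring
  have hr : (p.comp (Polynomial.X ^ 2) +
      q.comp (Polynomial.X ^ 2) * Polynomial.X ^ (2 * n + 1) : Polynomial k) = 0 := by
    apply Polynomial.toLaurent_injective
    rw [map_add, map_mul, hcomp, hcomp, hodd, map_zero]
    exact hg
  -- now deduce p = q = 0
  have hX2ne : (Polynomial.X ^ 2 : Polynomial k) ≠
      Polynomial.C ((Polynomial.X ^ 2 : Polynomial k).coeff 0) := by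
    simp only [Polynomial.coeff_X_pow]
    norm_num
  have hcompne : ∀ r : Polynomial k, r ≠ 0 → r.comp (Polynomial.X ^ 2) ≠ 0 := by
    intro r hr0 hc
    rcases Polynomial.comp_eq_zero_iff.mp hc with h | h
    · exact hr0 h
    · exact hX2ne h.2
  have hq0 : q = 0 := by
    by_contra hq0
    have hqc := hcompne q hq0
    have hpc : p.comp (Polynomial.X ^ 2) =
        -(q.comp (Polynomial.X ^ 2) * Polynomial.X ^ (2 * n + 1)) := by
      linear_combination hr
    have hrhsne : q.comp (Polynomial.X ^ 2) * (Polynomial.X : Polynomial k) ^ (2 * n + 1) ≠ 0 :=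
      mul_ne_zero hqc (pow_ne_zero _ Polynomial.X_ne_zero)
    have hpne : p ≠ 0 := by
      intro h; rw [h, Polynomial.zero_comp] at hpc
      exact hrhsne (neg_eq_zero.mp hpc.symm)
    have hdeg := congrArg Polynomial.natDegree hpc
    rw [Polynomial.natDegree_neg, Polynomial.natDegree_comp,
      Polynomial.natDegree_mul hqc (pow_ne_zero _ Polynomial.X_ne_zero),
      Polynomial.natDegree_comp, Polynomial.natDegree_X_pow, Polynomial.natDegree_X_pow] at hdeg
    omega
  have hp0 : p = 0 := by
    rw [hq0, Polynomial.zero_comp, zero_mul, add_zero] at hr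
    by_contra hp0
    exact hcompne p hp0 hr
  rw [hp0, hq0] at hpq
  simpa using Ideal.Quotient.eq_zero_iff_mem.mp (by simpa using hpq)

/-- Let `k` be a field, `n ≥ 1`, and `R = k[x, y]/(x^{2n+1} − y²)` graded with
`deg x = 2`, `deg y = 2n+1`.  The graded `k`-algebra homomorphism `k[x, y] → k[t, t⁻¹]`
with `x ↦ t²`, `y ↦ t^{2n+1}` induces an isomorphism from the graded total quotient ring
of `R` onto the Laurent polynomial ring `k[t, t⁻¹]`. -/
theorem gradedTotalQuotient_A_even (n : ℕ) (hn : 1 ≤ n)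
    (I : Ideal (MvPolynomial (Fin 2) k))
    (hI : I = Ideal.span {(X 0 : MvPolynomial (Fin 2) k) ^ (2 * n + 1) - X 1 ^ 2}) :
    ∃ e : gradedTotalQuotient (k := k) ![2, 2 * n + 1] I ≃+* LaurentPolynomial k,
      ∀ p : MvPolynomial (Fin 2) k,
        e (algebraMap (MvPolynomial (Fin 2) k ⧸ I)
            (gradedTotalQuotient (k := k) ![2, 2 * n + 1] I) (Ideal.Quotient.mk I p)) =
          aeval ![T 2, T (2 * n + 1)] p := by
  classical
  have hIle : ∀ a ∈ I, (aeval ![T 2, T (2 * n + 1)]) a = (0 : LaurentPolynomial k) := by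
    intro a ha
    rw [hI, Ideal.mem_span_singleton'] at ha
    obtain ⟨c, rfl⟩ := ha
    rw [map_mul, map_sub, map_pow, map_pow, aeval_X, aeval_X]
    have h1 : (![T 2, T (2 * n + 1)] : Fin 2 → LaurentPolynomial k) 0 = T 2 := rfl
    have h2 : (![T 2, T (2 * n + 1)] : Fin 2 → LaurentPolynomial k) 1 = T (2 * n + 1) := rfl
    rw [h1, h2, T_pow, T_pow]
    have h3 : ((2 * n + 1 : ℕ) : ℤ) * 2 = 2 * (2 * (n : ℤ) + 1) := by push_cast; ring
    rw [h3]
    have h4 : ((2 : ℕ) : ℤ) * (2 * (n : ℤ) + 1) = 2 * (2 * (n : ℤ) + 1) := by push_cast; ring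
    rw [h4, sub_self, mul_zero]
  have hker : ∀ f, aeval ![T 2, T (2 * n + 1)] f = (0 : LaurentPolynomial k) → f ∈ I :=
    aux_ker n I hI hIle
  set R := MvPolynomial (Fin 2) k ⧸ I with hR
  let φbar : R →+* LaurentPolynomial k :=
    Ideal.Quotient.lift I ((aeval ![T 2, T (2 * n + 1)] :
      MvPolynomial (Fin 2) k →ₐ[k] LaurentPolynomial k) : MvPolynomial (Fin 2) k →+* _) hIle
  have hφbar : ∀ f, φbar (Ideal.Quotient.mk I f) = aeval ![T 2, T (2 * n + 1)] f := fun f =>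
    Ideal.Quotient.lift_mk I _ _
  have hinj : Function.Injective φbar :=
    RingHom.lift_injective_of_ker_le_ideal I hIle fun a ha => hker a ha
  haveI : Nontrivial R := by
    refine ⟨Ideal.Quotient.mk I 1, 0, fun h => ?_⟩
    have := hker 1 (by rw [← hφbar, h, map_zero])
    have h1 := hIle 1 this
    rw [map_one] at h1
    exact one_ne_zero h1
  haveI : IsDomain (LaurentPolynomial k) := NoZeroDivisors.to_isDomain _
  haveI : IsDomain R := hinj.isDomain φbar
  set S := homogeneousNZD (k := k) ![2, 2 * n + 1] I with hS
  have hunits : ∀ s : S, IsUnit (φbar s) := by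
    rintro ⟨s, ⟨m, P, hP, rfl⟩, hnzd⟩
    obtain ⟨c, hc⟩ := aux_homog n P m hP
    have hne : φbar (Ideal.Quotient.mk I P) ≠ 0 := by
      intro h0
      have : Ideal.Quotient.mk I P = 0 := hinj (by rw [h0, map_zero])
      rw [this] at hnzd
      exact zero_notMem_nonZeroDivisors hnzd
    have heq : φbar (Ideal.Quotient.mk I P) = LaurentPolynomial.C c * T (m : ℤ) := by
      rw [hφbar, hc]
    have hc0 : c ≠ 0 := by
      intro h
      rw [h, map_zero, zero_mul] at heq
      exact hne heq
    rw [heq]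
    exact ((isUnit_iff_ne_zero.mpr hc0).map LaurentPolynomial.C).mul (isUnit_T _)
  let ψ : Localization S →+* LaurentPolynomial k := IsLocalization.lift (S := Localization S) hunits
  have hcomm : ∀ r : R, ψ (algebraMap R (Localization S) r) = φbar r := fun r =>
    IsLocalization.lift_eq hunits r
  -- injectivity
  have hinj2 : Function.Injective ψ := by
    rw [injective_iff_map_eq_zero]
    intro z hz
    obtain ⟨⟨r, s⟩, rfl⟩ := IsLocalization.mk'_surjective S z
    have hr0 : φbar r = 0 := by
      have := (IsLocalization.lift_mk'_spec _ _ _ _).mp hz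
      simpa using this
    have : r = 0 := hinj (by rw [hr0, map_zero])
    simp only at this ⊢
    rw [this, IsLocalization.mk'_zero]
  -- elements of S
  have hTne : ∀ m : ℤ, (T m : LaurentPolynomial k) ≠ 0 := fun m => (isUnit_T m).ne_zero
  have hmkne : ∀ P : MvPolynomial (Fin 2) k,
      aeval ![T 2, T (2 * n + 1)] P ≠ (0 : LaurentPolynomial k) →
        Ideal.Quotient.mk I P ≠ 0 := by
    intro P hP h0
    exact hP (by rw [← hφbar, h0, map_zero])
  have hx0n : (Ideal.Quotient.mk I ((X 0 : MvPolynomial (Fin 2) k) ^ n)) ∈ S := by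
    constructor
    · refine ⟨n * 2, (X 0) ^ n, ?_, rfl⟩
      have := aux_wh_pow (w := ![2, 2 * n + 1])
        (isWeightedHomogeneous_X k ![2, 2 * n + 1] 0) n
      simpa using this
    · refine mem_nonZeroDivisors_of_ne_zero (hmkne _ ?_)
      rw [map_pow, aeval_X]
      have h1 : (![T 2, T (2 * n + 1)] : Fin 2 → LaurentPolynomial k) 0 = T 2 := rfl
      rw [h1, T_pow]
      exact hTne _
  have hx1 : (Ideal.Quotient.mk I (X 1 : MvPolynomial (Fin 2) k)) ∈ S := by
    constructor
    · refine ⟨2 * n + 1, X 1, ?_, rfl⟩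
      have := isWeightedHomogeneous_X k ![2, 2 * n + 1] 1
      simpa using this
    · refine mem_nonZeroDivisors_of_ne_zero (hmkne _ ?_)
      rw [aeval_X]
      exact hTne _
  have hφx0n : φbar (Ideal.Quotient.mk I ((X 0 : MvPolynomial (Fin 2) k) ^ n)) =
      T (2 * n : ℤ) := by
    rw [hφbar, map_pow, aeval_X]
    have h1 : (![T 2, T (2 * n + 1)] : Fin 2 → LaurentPolynomial k) 0 = T 2 := rfl
    rw [h1, T_pow]
    congr 1
    push_cast
    ring
  have hφx1 : φbar (Ideal.Quotient.mk I (X 1 : MvPolynomial (Fin 2) k)) =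
      T (2 * n + 1 : ℤ) := by
    rw [hφbar, aeval_X]
    rfl
  -- surjectivity
  have hT1 : (T 1 : LaurentPolynomial k) ∈ ψ.range := by
    refine ⟨IsLocalization.mk' (Localization S)
      (Ideal.Quotient.mk I (X 1 : MvPolynomial (Fin 2) k)) ⟨_, hx0n⟩, ?_⟩
    refine (IsLocalization.lift_mk'_spec _ _ _ _).mpr ?_
    rw [hφx1]
    show _ = φbar _ * _
    rw [hφx0n, ← T_add]
  have hTm1 : (T (-1) : LaurentPolynomial k) ∈ ψ.range := by
    refine ⟨IsLocalization.mk' (Localization S)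
      (Ideal.Quotient.mk I ((X 0 : MvPolynomial (Fin 2) k) ^ n)) ⟨_, hx1⟩, ?_⟩
    refine (IsLocalization.lift_mk'_spec _ _ _ _).mpr ?_
    rw [hφx0n]
    show _ = φbar _ * _
    rw [hφx1, ← T_add]
    congr 1
    ring
  have hTall : ∀ m : ℤ, (T m : LaurentPolynomial k) ∈ ψ.range := by
    intro m
    rcases le_or_gt 0 m with hm | hm
    · have : (T m : LaurentPolynomial k) = T 1 ^ m.toNat := by
        rw [T_pow, mul_one, Int.toNat_of_nonneg hm]
      rw [this]
      exact pow_mem hT1 _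
    · have : (T m : LaurentPolynomial k) = T (-1) ^ (-m).toNat := by
        rw [T_pow]
        congr 1
        rw [Int.toNat_of_nonneg (by omega : (0:ℤ) ≤ -m)]
        ring
      rw [this]
      exact pow_mem hTm1 _
  have hCmem : ∀ a : k, (LaurentPolynomial.C a : LaurentPolynomial k) ∈ ψ.range := by
    intro a
    refine ⟨algebraMap R (Localization S) (Ideal.Quotient.mk I (MvPolynomial.C a)), ?_⟩
    rw [hcomm, hφbar, aeval_C, ← LaurentPolynomial.C_eq_algebraMap]
  have hsurj : Function.Surjective ψ := by
    intro f
    have : f ∈ ψ.range := by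
      induction f using LaurentPolynomial.induction_on' with
      | add p q hp hq => exact add_mem hp hq
      | C_mul_T m a => exact mul_mem (hCmem a) (hTall m)
    exact this
  refine ⟨RingEquiv.ofBijective ψ ⟨hinj2, hsurj⟩, fun p => ?_⟩
  show ψ (algebraMap R (Localization S) (Ideal.Quotient.mk I p)) = _
  rw [hcomm, hφbar]
end

section
/- Let k be a field and let R = k[x, y]/(x^5 − y^3), graded with deg x = 3 and deg y = 5 (so x^5 − y^3 is homogeneous of degree 15). Then the graded k-algebra homomorphism k[x, y] → k[t, t^{-1}] determined by x ↦ t^3 and y ↦ t^5 (where deg t = 1) induces an isomorphism from the graded total quotient ring of R onto the Laurent polynomial ring k[t, t^{-1}]. -/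
open MvPolynomial LaurentPolynomial

universe u

set_option synthInstance.maxHeartbeats 1000000
set_option maxHeartbeats 1000000

variable {k : Type u} [Field k]

lemma aeval_monomial_T (m : Fin 2 →₀ ℕ) (c : k) :
    aeval ![T 3, T 5] (monomial m c) =
      AddMonoidAlgebra.single (3 * (m 0 : ℤ) + 5 * (m 1 : ℤ)) c := by
  rw [MvPolynomial.aeval_monomial, Finsupp.prod_fintype _ _ (fun i => pow_zero _),
    Fin.prod_univ_two]
  simp only [Matrix.cons_val_zero, Matrix.cons_val_one, Matrix.head_cons, T_pow]
  rw [single_eq_C_mul_T,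
    show algebraMap k (LaurentPolynomial k) c = LaurentPolynomial.C c from rfl,
    ← T_add]
  congr 2
  ring

lemma low_y_injective (r : MvPolynomial (Fin 2) k)
    (hs : ∀ m ∈ r.support, m 1 < 3)
    (h0 : aeval ![(T 3 : LaurentPolynomial k), T 5] r = 0) : r = 0 := by
  by_contra hr
  obtain ⟨m₀, hm₀⟩ := (MvPolynomial.support_nonempty (p := r)).mpr hr
  have hsum : aeval ![T 3, T 5] r =
      ∑ m ∈ r.support, AddMonoidAlgebra.single (3 * (m 0 : ℤ) + 5 * (m 1 : ℤ)) (coeff m r) := by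
    conv_lhs => rw [r.as_sum]
    rw [map_sum]
    exact Finset.sum_congr rfl fun m _ => aeval_monomial_T m _
  have := congrArg (fun f : LaurentPolynomial k => f.coeff (3 * (m₀ 0 : ℤ) + 5 * (m₀ 1 : ℤ)))
    (hsum.symm.trans h0)
  simp only [AddMonoidAlgebra.coeff_zero, AddMonoidAlgebra.coeff_sum, AddMonoidAlgebra.coeff_single, Finsupp.coe_zero, Pi.zero_apply, Finsupp.finset_sum_apply] at this
  rw [Finset.sum_eq_single_of_mem m₀ hm₀] at this
  · rw [Finsupp.single_apply, if_pos rfl] at this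
    exact (MvPolynomial.mem_support_iff.mp hm₀) this
  · intro m hm hne
    rw [Finsupp.single_apply, if_neg]
    intro h
    apply hne
    have h1 := hs m hm
    have h2 := hs m₀ hm₀
    have : m 0 = m₀ 0 ∧ m 1 = m₀ 1 := by omega
    ext i
    fin_cases i <;> simp [this.1, this.2]

lemma homog_image (p : MvPolynomial (Fin 2) k) {n : ℕ}
    (hp : p.IsWeightedHomogeneous ![3, 5] n) :
    ∃ c : k, aeval ![(T 3 : LaurentPolynomial k), T 5] p = AddMonoidAlgebra.single (n : ℤ) c := by
  refine ⟨∑ m ∈ p.support, coeff m p, ?_⟩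
  conv_lhs => rw [p.as_sum]
  rw [map_sum, ← AddMonoidAlgebra.singleAddHom_apply, map_sum]
  refine Finset.sum_congr rfl fun m hm => ?_
  rw [aeval_monomial_T, AddMonoidAlgebra.singleAddHom_apply]
  congr 1
  have := hp (MvPolynomial.mem_support_iff.mp hm)
  rw [← this]
  rw [Finsupp.weight_apply, Finsupp.sum_fintype, Fin.sum_univ_two]
  · simp only [Matrix.cons_val_zero, Matrix.cons_val_one, Matrix.head_cons, smul_eq_mul]
    push_cast
    ring
  · exact fun i => zero_smul _ _

lemma mono2 (a b : ℕ) (c : k) :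
    (monomial (Finsupp.single 0 a + Finsupp.single 1 b) c : MvPolynomial (Fin 2) k) =
      MvPolynomial.C c * X 0 ^ a * X 1 ^ b := by
  rw [MvPolynomial.X_pow_eq_monomial, MvPolynomial.X_pow_eq_monomial,
    MvPolynomial.C_apply, MvPolynomial.monomial_mul, MvPolynomial.monomial_mul]
  simp

lemma fin2_decomp (m : Fin 2 →₀ ℕ) :
    m = Finsupp.single 0 (m 0) + Finsupp.single 1 (m 1) := by
  ext i
  fin_cases i <;> simp [Finsupp.single_apply]

lemma reduce (p : MvPolynomial (Fin 2) k) :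
    ∃ r : MvPolynomial (Fin 2) k, (∀ m ∈ r.support, m 1 < 3) ∧
      Ideal.Quotient.mk (Ideal.span {(X 0 : MvPolynomial (Fin 2) k) ^ 5 - X 1 ^ 3}) p =
        Ideal.Quotient.mk _ r := by
  set I : Ideal (MvPolynomial (Fin 2) k) := Ideal.span {(X 0 : MvPolynomial (Fin 2) k) ^ 5 - X 1 ^ 3} with hIdef
  induction p using MvPolynomial.induction_on' with
  | add p q hp hq =>
    obtain ⟨r1, h1, e1⟩ := hp
    obtain ⟨r2, h2, e2⟩ := hq
    refine ⟨r1 + r2, fun m hm => ?_, by rw [map_add, e1, e2, map_add]⟩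
    rcases Finset.mem_union.mp (Finsupp.support_add hm) with h | h
    · exact h1 m h
    · exact h2 m h
  | monomial m c =>
    refine ⟨monomial (Finsupp.single 0 (m 0 + 5 * (m 1 / 3)) + Finsupp.single 1 (m 1 % 3)) c,
      fun m' hm' => ?_, ?_⟩
    · rcases Finset.mem_singleton.mp (MvPolynomial.support_monomial_subset hm') with rfl
      simp [Finsupp.single_apply]
      omega
    · have hy3 : (Ideal.Quotient.mk I ((X 1 : MvPolynomial (Fin 2) k))) ^ 3 =
          (Ideal.Quotient.mk I ((X 0 : MvPolynomial (Fin 2) k))) ^ 5 := by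
        rw [← map_pow, ← map_pow, Ideal.Quotient.mk_eq_mk_iff_sub_mem]
        have : ((X 0 : MvPolynomial (Fin 2) k) ^ 5 - X 1 ^ 3) ∈ I :=
          Ideal.subset_span (Set.mem_singleton _)
        simpa using I.neg_mem this
      conv_lhs => rw [fin2_decomp m]
      rw [mono2, mono2, map_mul, map_mul, map_mul, map_mul, map_pow, map_pow, map_pow,
        map_pow]
      conv_lhs => rw [show m 1 = 3 * (m 1 / 3) + m 1 % 3 by omega]
      rw [pow_add, pow_mul, hy3, ← pow_mul, pow_add (Ideal.Quotient.mk I (X 0))]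
      ring

lemma aeval_gen_zero :
    aeval ![(T 3 : LaurentPolynomial k), T 5] ((X 0 : MvPolynomial (Fin 2) k) ^ 5 - X 1 ^ 3) = 0 := by
  rw [map_sub, map_pow, map_pow, MvPolynomial.aeval_X, MvPolynomial.aeval_X]
  simp [T_pow]

lemma aeval_vanish {p : MvPolynomial (Fin 2) k}
    (hp : p ∈ Ideal.span {(X 0 : MvPolynomial (Fin 2) k) ^ 5 - X 1 ^ 3}) :
    aeval ![(T 3 : LaurentPolynomial k), T 5] p = 0 := by
  obtain ⟨a, rfl⟩ := Ideal.mem_span_singleton'.mp hp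
  rw [map_mul, aeval_gen_zero, mul_zero]

lemma mem_span_of_aeval {p : MvPolynomial (Fin 2) k}
    (h : aeval ![(T 3 : LaurentPolynomial k), T 5] p = 0) :
    p ∈ Ideal.span {(X 0 : MvPolynomial (Fin 2) k) ^ 5 - X 1 ^ 3} := by
  obtain ⟨r, hr, he⟩ := reduce p
  have hpr : p - r ∈ Ideal.span {(X 0 : MvPolynomial (Fin 2) k) ^ 5 - X 1 ^ 3} :=
    (Ideal.Quotient.mk_eq_mk_iff_sub_mem p r).mp he
  have hav : aeval ![(T 3 : LaurentPolynomial k), T 5] r = 0 := by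
    have := aeval_vanish hpr
    rw [map_sub, h, zero_sub, neg_eq_zero] at this
    exact this
  have : r = 0 := low_y_injective r hr hav
  simpa [this] using hpr

lemma mem_homogeneousNZD_iff (w : Fin 2 → ℕ) (I : Ideal (MvPolynomial (Fin 2) k))
    (r : MvPolynomial (Fin 2) k ⧸ I) :
    r ∈ homogeneousNZD w I ↔ (∃ (n : ℕ) (p : MvPolynomial (Fin 2) k),
      p.IsWeightedHomogeneous w n ∧ Ideal.Quotient.mk I p = r) ∧
    r ∈ nonZeroDivisors (MvPolynomial (Fin 2) k ⧸ I) := Iff.rfl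

/-- Let `k` be a field and `R = k[x, y]/(x⁵ − y³)` graded with `deg x = 3`, `deg y = 5`.
The graded `k`-algebra homomorphism `k[x, y] → k[t, t⁻¹]` with `x ↦ t³`, `y ↦ t⁵`
induces an isomorphism from the graded total quotient ring of `R` onto the Laurent
polynomial ring `k[t, t⁻¹]`. -/
theorem gradedTotalQuotient_E8
    (I : Ideal (MvPolynomial (Fin 2) k))
    (hI : I = Ideal.span {(X 0 : MvPolynomial (Fin 2) k) ^ 5 - X 1 ^ 3}) :
    ∃ e : gradedTotalQuotient (k := k) ![3, 5] I ≃+* LaurentPolynomial k,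
      ∀ p : MvPolynomial (Fin 2) k,
        e (algebraMap (MvPolynomial (Fin 2) k ⧸ I)
            (gradedTotalQuotient (k := k) ![3, 5] I) (Ideal.Quotient.mk I p)) =
          aeval ![T 3, T 5] p := by
  subst hI
  set I : Ideal (MvPolynomial (Fin 2) k) :=
    Ideal.span {(X 0 : MvPolynomial (Fin 2) k) ^ 5 - X 1 ^ 3} with hIdef
  set φ : (MvPolynomial (Fin 2) k ⧸ I) →+* LaurentPolynomial k :=
    Ideal.Quotient.lift I (aeval ![(T 3 : LaurentPolynomial k), T 5]).toRingHom
      (fun _ ha => aeval_vanish ha) with hφdef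
  have hφmk : ∀ p : MvPolynomial (Fin 2) k,
      φ (Ideal.Quotient.mk I p) = aeval ![(T 3 : LaurentPolynomial k), T 5] p :=
    fun p => Ideal.Quotient.lift_mk I _ _
  have φinj : Function.Injective φ := by
    rw [injective_iff_map_eq_zero]
    intro a ha
    obtain ⟨p, rfl⟩ := Ideal.Quotient.mk_surjective a
    rw [hφmk] at ha
    exact Ideal.Quotient.eq_zero_iff_mem.mpr (mem_span_of_aeval ha)
  have hItop : I ≠ ⊤ := by
    intro h
    have h1 : (1 : MvPolynomial (Fin 2) k) ∈ I := h ▸ Submodule.mem_top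
    have := aeval_vanish h1
    rw [map_one] at this
    exact one_ne_zero this
  have : Nontrivial (MvPolynomial (Fin 2) k ⧸ I) := Ideal.Quotient.nontrivial_iff.mpr hItop
  set S := homogeneousNZD (k := k) ![3, 5] I with hSdef
  have hunit : ∀ s : S, IsUnit (φ s) := by
    rintro ⟨s, hs⟩
    obtain ⟨⟨n, p, hp, rfl⟩, hnzd⟩ := (mem_homogeneousNZD_iff _ _ _).mp hs
    obtain ⟨c, hc⟩ := homog_image p hp
    have hsne : Ideal.Quotient.mk I p ≠ 0 := nonZeroDivisors.ne_zero hnzd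
    have hφs : φ (Ideal.Quotient.mk I p) = AddMonoidAlgebra.single (n : ℤ) c := by
      rw [hφmk]; exact hc
    have hcne : c ≠ 0 := by
      intro h
      apply hsne
      apply φinj
      rw [hφs, h, AddMonoidAlgebra.single_zero, map_zero]
    rw [hφs, single_eq_C_mul_T]
    exact ((isUnit_iff_ne_zero.mpr hcne).map (LaurentPolynomial.C : k →+* _)).mul (isUnit_T _)
  set ψ : Localization S →+* LaurentPolynomial k := IsLocalization.lift (S := Localization S) hunit with hψdef
  have hψalg : ∀ r, ψ (algebraMap (MvPolynomial (Fin 2) k ⧸ I) (Localization S) r) = φ r :=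
    fun r => IsLocalization.lift_eq hunit r
  have ψinj : Function.Injective ψ := by
    rw [injective_iff_map_eq_zero]
    intro z hz
    obtain ⟨⟨r, s⟩, rfl⟩ := IsLocalization.mk'_surjective S z
    have h := (IsLocalization.lift_mk'_spec (S := Localization S) (hg := hunit) r 0 s).mp hz
    rw [mul_zero] at h
    have : r = 0 := φinj (by rw [map_zero, h])
    rw [this]
    exact IsLocalization.mk'_zero _
  -- non-zero-divisor facts for X 0 and X 1
  have hNZD : ∀ (q : MvPolynomial (Fin 2) k) (n : ℤ),
      φ (Ideal.Quotient.mk I q) = T n →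
      Ideal.Quotient.mk I q ∈ nonZeroDivisors (MvPolynomial (Fin 2) k ⧸ I) := by
    intro q n hq
    refine mem_nonZeroDivisors_iff_right.mpr ?_
    intro a ha
    apply φinj
    rw [map_zero]
    have : φ a * T n = 0 := by rw [← hq, ← map_mul, ha, map_zero]
    exact ((isUnit_T n).mul_left_eq_zero).mp this
  have hφX0 : φ (Ideal.Quotient.mk I (X 0)) = T 3 := by
    rw [hφmk, MvPolynomial.aeval_X]; rfl
  have hφX1 : φ (Ideal.Quotient.mk I (X 1)) = T 5 := by
    rw [hφmk, MvPolynomial.aeval_X]; rfl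
  have hX0S : Ideal.Quotient.mk I (X 0) ∈ S := by
    rw [hSdef, mem_homogeneousNZD_iff]
    exact ⟨⟨3, X 0, by simpa using isWeightedHomogeneous_X k ![3, 5] 0, rfl⟩, hNZD _ 3 hφX0⟩
  have hX1S : Ideal.Quotient.mk I (X 1) ∈ S := by
    rw [hSdef, mem_homogeneousNZD_iff]
    exact ⟨⟨5, X 1, by simpa using isWeightedHomogeneous_X k ![3, 5] 1, rfl⟩, hNZD _ 5 hφX1⟩
  -- surjectivity
  have hT3 : T 3 ∈ ψ.range :=
    ⟨algebraMap _ _ (Ideal.Quotient.mk I (X 0)), by rw [hψalg, hφX0]⟩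
  have hT5 : T 5 ∈ ψ.range :=
    ⟨algebraMap _ _ (Ideal.Quotient.mk I (X 1)), by rw [hψalg, hφX1]⟩
  have hT3inv : T (-3) ∈ ψ.range := by
    refine ⟨IsLocalization.mk' (Localization S) 1 ⟨_, hX0S⟩, ?_⟩
    refine (IsLocalization.lift_mk'_spec (S := Localization S) (hg := hunit) 1 (T (-3))
      ⟨_, hX0S⟩).mpr ?_
    have h2 : φ ((⟨_, hX0S⟩ : S) : MvPolynomial (Fin 2) k ⧸ I) = T 3 := hφX0
    rw [map_one, h2, ← T_add]
    norm_num
  have hTm1 : T (-1) ∈ ψ.range := by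
    have := mul_mem (mul_mem hT5 hT3inv) hT3inv
    rwa [← T_add, ← T_add, show (5 : ℤ) + -3 + -3 = -1 by norm_num] at this
  have hT1 : T 1 ∈ ψ.range := by
    have := mul_mem (mul_mem hT3 hTm1) hTm1
    rwa [← T_add, ← T_add, show (3 : ℤ) + -1 + -1 = 1 by norm_num] at this
  have hTn : ∀ n : ℤ, T n ∈ ψ.range := by
    intro n
    have : (T n : LaurentPolynomial k) = T 1 ^ n.toNat * T (-1) ^ (-n).toNat := by
      rw [T_pow, T_pow, ← T_add]
      congr 1
      omega
    rw [this]
    exact mul_mem (pow_mem hT1 _) (pow_mem hTm1 _)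
  have hC : ∀ c : k, LaurentPolynomial.C c ∈ ψ.range := by
    intro c
    refine ⟨algebraMap _ _ (Ideal.Quotient.mk I (MvPolynomial.C c)), ?_⟩
    rw [hψalg, hφmk, MvPolynomial.aeval_C]
    rfl
  have ψsurj : Function.Surjective ψ := by
    intro f
    suffices h : f ∈ ψ.range by exact h
    rw [← AddMonoidAlgebra.sum_coeff_single f, Finsupp.sum]
    refine Subring.sum_mem _ fun n _ => ?_
    rw [single_eq_C_mul_T]
    exact mul_mem (hC _) (hTn _)
  refine ⟨RingEquiv.ofBijective ψ ⟨ψinj, ψsurj⟩, fun p => ?_⟩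
  show ψ _ = _
  rw [hψalg, hφmk]
end
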